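/- Let C be a configuration on a finite connected graph G = (V,E) and D a target distribution. If C solves D and supp(C) ∩ supp(D) = ∅, then pot(C) ≥ |D|. -/

import Mathlib

/-- A single pebbling step: remove two pebbles from `u` and add one to an adjacent `v`. -/
def PebblingStep {V : Type} [DecidableEq V] (G : SimpleGraph V) (C C' : V → ℕ) : Prop :=
  ∃ u v : V, G.Adj u v ∧ 2 ≤ C u ∧
    C' = fun w => if w = u then C u - 2 else if w = v then C v + 1 else C w

/-- `C` solves the target distribution `D`: some sequence of pebbling steps reaches a
configuration with at least `D v` pebbles on each vertex `v`. -/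
def Solvable {V : Type} [DecidableEq V] (G : SimpleGraph V) (C D : V → ℕ) : Prop :=
  ∃ C' : V → ℕ, Relation.ReflTransGen (PebblingStep G) C C' ∧ ∀ v, D v ≤ C' v

/-- The distribution with `t` pebbles stacked on `r` and none elsewhere. -/
def stack {V : Type} [DecidableEq V] (r : V) (t : ℕ) : V → ℕ :=
  fun v => if v = r then t else 0

/-- The pebbling number of the demand `D` in `G`: the smallest `m` such that every
configuration of size `m` is `D`-solvable. -/
noncomputable def pebblingNumber {V : Type} [Fintype V] [DecidableEq V] (G : SimpleGraph V) (D : V → ℕ) : ℕ :=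
  sInf {m | ∀ C : V → ℕ, (∑ v, C v) = m → Solvable G C D}

/-- The `t`-fold pebbling number of `G`. -/
noncomputable def tPebblingNumber {V : Type} [Fintype V] [DecidableEq V]
    (G : SimpleGraph V) (t : ℕ) : ℕ :=
  Finset.univ.sup fun r => pebblingNumber G (stack r t)

/-- Reaching `C'` from `C` by exactly `k` pebbling steps. -/
inductive StepsN {V : Type} [DecidableEq V] (G : SimpleGraph V) : ℕ → (V → ℕ) → (V → ℕ) → Prop
  | refl (C : V → ℕ) : StepsN G 0 C C
  | tail {k : ℕ} {C C' C'' : V → ℕ} :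
      StepsN G k C C' → PebblingStep G C' C'' → StepsN G (k + 1) C C''

/-- `C` has an `r`-solution of cost at most `c` (cost = number of pebbling steps plus one). -/
def CheaplySolvable {V : Type} [DecidableEq V] (G : SimpleGraph V) (C : V → ℕ) (r : V) (c : ℕ) : Prop :=
  ∃ (k : ℕ) (C' : V → ℕ), StepsN G k C C' ∧ 1 ≤ C' r ∧ k + 1 ≤ c

/-- The eccentricity of a vertex: the maximum distance to any other vertex. -/
noncomputable def eccentricity {V : Type} [Fintype V] (G : SimpleGraph V) (r : V) : ℕ :=
  Finset.univ.sup fun v => G.dist r v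

/-- A vertex is simplicial if its neighborhood induces a complete graph. -/
def IsSimplicial {V : Type} (G : SimpleGraph V) (v : V) : Prop :=
  ∀ a b : V, G.Adj v a → G.Adj v b → a ≠ b → G.Adj a b

/-- A 2-path is either `K₂` or `K₃`, or a graph with exactly two simplicial vertices
`u` and `v` such that the neighborhood of `v` induces `K₂` and `G - v` is a 2-path. -/
inductive IsTwoPath : {V : Type} → SimpleGraph V → Prop
  | complete2 {V : Type} (G : SimpleGraph V) :
      Nat.card V = 2 → (∀ a b : V, a ≠ b → G.Adj a b) → IsTwoPath G
  | complete3 {V : Type} (G : SimpleGraph V) :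
      Nat.card V = 3 → (∀ a b : V, a ≠ b → G.Adj a b) → IsTwoPath G
  | extend {V : Type} (G : SimpleGraph V) (u v : V) :
      u ≠ v →
      {w : V | IsSimplicial G w} = {u, v} →
      (G.neighborSet v).ncard = 2 →
      IsSimplicial G v →
      IsTwoPath (G.induce {w : V | w ≠ v}) →
      IsTwoPath G

/-- The Kneser graph `K(m, h)`: vertices are the `h`-element subsets of `{1, …, m}`,
adjacent iff disjoint. -/
def kneserGraph (m h : ℕ) : SimpleGraph {s : Finset (Fin m) // s.card = h} :=
  SimpleGraph.fromRel fun a b => Disjoint a.1 b.1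


lemma phi_step {V : Type} [Fintype V] [DecidableEq V]
    (G : SimpleGraph V) (D : V → ℕ) {C C' : V → ℕ} (h : PebblingStep G C C') :
    ∑ w, (if 0 < D w then C' w else C' w / 2) ≤
      ∑ w, (if 0 < D w then C w else C w / 2) := by
  obtain ⟨u, v, hadj, h2, rfl⟩ := h
  have huv : u ≠ v := hadj.ne
  set φ : V → ℕ → ℕ := fun w n => if 0 < D w then n else n / 2 with hφ
  have key : ∀ f : V → ℕ,
      ∑ w, φ w (f w) = φ u (f u) + (φ v (f v) + ∑ w ∈ (Finset.univ.erase u).erase v, φ w (f w)) := by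
    intro f
    rw [← Finset.add_sum_erase Finset.univ (fun w => φ w (f w)) (Finset.mem_univ u),
        ← Finset.add_sum_erase (Finset.univ.erase u) (fun w => φ w (f w))
          (Finset.mem_erase.mpr ⟨huv.symm, Finset.mem_univ v⟩)]
  show ∑ w, φ w (if w = u then C u - 2 else if w = v then C v + 1 else C w) ≤ ∑ w, φ w (C w)
  simp only [key]
  have hsame : ∑ w ∈ (Finset.univ.erase u).erase v,
      φ w (if w = u then C u - 2 else if w = v then C v + 1 else C w)
      = ∑ w ∈ (Finset.univ.erase u).erase v, φ w (C w) := by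
    apply Finset.sum_congr rfl
    intro w hw
    simp only [Finset.mem_erase] at hw
    rw [if_neg hw.2.1, if_neg hw.1]
  rw [hsame]
  simp only [if_true, if_neg huv.symm]
  have hpt : φ u (C u - 2) + φ v (C v + 1) ≤ φ u (C u) + φ v (C v) := by
    simp only [hφ]
    split_ifs <;> omega
  omega

lemma phi_rtg {V : Type} [Fintype V] [DecidableEq V]
    (G : SimpleGraph V) (D : V → ℕ) {C C' : V → ℕ}
    (h : Relation.ReflTransGen (PebblingStep G) C C') :
    ∑ w, (if 0 < D w then C' w else C' w / 2) ≤
      ∑ w, (if 0 < D w then C w else C w / 2) := by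
  induction h with
  | refl => exact le_refl _
  | tail _ hstep ih => exact le_trans (phi_step G D hstep) ih

theorem potential_lemma_part2 {V : Type} [Fintype V] [DecidableEq V]
    (G : SimpleGraph V) (hG : G.Connected) (C D : V → ℕ)
    (hsolve : Solvable G C D)
    (hdisj : Disjoint {v : V | 0 < C v} {v : V | 0 < D v}) :
    ∑ v, D v ≤ ∑ v, C v / 2 := by
  obtain ⟨C', hsteps, hD⟩ := hsolve
  have hzero : ∀ v, 0 < D v → C v = 0 := by
    intro v hv
    by_contra h
    exact Set.disjoint_left.mp hdisj (Nat.pos_of_ne_zero h) hv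
  calc ∑ v, D v ≤ ∑ w, (if 0 < D w then C' w else C' w / 2) := by
        apply Finset.sum_le_sum
        intro w _
        split_ifs with h
        · exact hD w
        · omega
    _ ≤ ∑ w, (if 0 < D w then C w else C w / 2) := phi_rtg G D hsteps
    _ = ∑ v, C v / 2 := by
        apply Finset.sum_congr rfl
        intro w _
        split_ifs with h
        · rw [hzero w h]
        · rfl
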